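/- For all α > 0, θ > 0 and β > 0, the variance of the extended xgamma distribution satisfies ∫₀^∞ x² · f(x; α, θ, β) dx − (∫₀^∞ x · f(x; α, θ, β) dx)² = (θ·α·(α+1) + β·(α+2)·(α+3)) / (θ²·(θ+β)) − ((θ·α + β·(α+2)) / (θ·(θ+β)))². -/

import Mathlib

open MeasureTheory Real

open Set
lemma exg_J {θ p : ℝ} (hθ : 0 < θ) (hp : -1 < p) :
    ∫ x in Ioi (0:ℝ), x ^ p * Real.exp (-θ * x)
      = Real.Gamma (p + 1) * (1 / θ) ^ (p + 1) := by
  have h := Real.integral_rpow_mul_exp_neg_mul_Ioi (a := p + 1) (by linarith) hθ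
  simp only [add_sub_cancel_right] at h
  simp_rw [neg_mul] at *
  rw [h]; ring

lemma exg_Ig {θ : ℝ} (hθ : 0 < θ) {p : ℝ} (hp : -1 < p) :
    IntegrableOn (fun x : ℝ => x ^ p * Real.exp (-θ * x)) (Ioi 0) := by
  have h := integrableOn_rpow_mul_exp_neg_mul_rpow (p := 1) hp (by norm_num) hθ
  refine h.congr_fun (fun x hx => ?_) measurableSet_Ioi
  simp only [Real.rpow_one]

lemma exg_int {θ : ℝ} (hθ : 0 < θ) {s t A B : ℝ} (hs : -1 < s) (ht : -1 < t) (f : ℝ → ℝ)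
    (hf : ∀ x ∈ Ioi (0:ℝ), f x
      = A * (x ^ s * Real.exp (-θ * x)) + B * (x ^ t * Real.exp (-θ * x))) :
    ∫ x in Ioi (0:ℝ), f x
      = A * (Real.Gamma (s + 1) * (1 / θ) ^ (s + 1))
        + B * (Real.Gamma (t + 1) * (1 / θ) ^ (t + 1)) := by
  rw [setIntegral_congr_fun measurableSet_Ioi hf,
    integral_add ((exg_Ig hθ hs).const_mul A) ((exg_Ig hθ ht).const_mul B),
    MeasureTheory.integral_const_mul, MeasureTheory.integral_const_mul, exg_J hθ hs, exg_J hθ ht]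

theorem exg_variance (α θ β : ℝ) (hα : 0 < α) (hθ : 0 < θ) (hβ : 0 < β) :
    (∫ x in Set.Ioi (0 : ℝ),
        x ^ 2 * ((θ ^ (α + 1) / ((θ + β) * Real.Gamma (α + 2))) * (α ^ 2 + α + θ * β * x ^ 2) *
          Real.exp (-θ * x) * x ^ (α - 1)))
      - (∫ x in Set.Ioi (0 : ℝ),
          x * ((θ ^ (α + 1) / ((θ + β) * Real.Gamma (α + 2))) * (α ^ 2 + α + θ * β * x ^ 2) *
            Real.exp (-θ * x) * x ^ (α - 1))) ^ 2
      = (θ * α * (α + 1) + β * (α + 2) * (α + 3)) / (θ ^ 2 * (θ + β))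
        - ((θ * α + β * (α + 2)) / (θ * (θ + β))) ^ 2 := by
  set c : ℝ := θ ^ (α + 1) / ((θ + β) * Real.Gamma (α + 2)) with hc
  -- pointwise power combination
  have key : ∀ x : ℝ, 0 < x → ∀ (n : ℕ) (r : ℝ), (n : ℝ) + (α - 1) = r →
      x ^ n * x ^ (α - 1) = x ^ r := by
    intro x hx n r h
    rw [← h, Real.rpow_add hx, Real.rpow_natCast]
  -- first moment
  have hM1 : (∫ x in Set.Ioi (0 : ℝ),
      x * (c * (α ^ 2 + α + θ * β * x ^ 2) * Real.exp (-θ * x) * x ^ (α - 1)))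
      = (c * (α ^ 2 + α)) * (Real.Gamma (α + 1) * (1 / θ) ^ (α + 1))
        + (c * (θ * β)) * (Real.Gamma (α + 3) * (1 / θ) ^ (α + 3)) := by
    have := exg_int (θ := θ) (A := c * (α ^ 2 + α)) (B := c * (θ * β)) hθ (s := α) (t := α + 2) (by linarith) (by linarith)
      (fun x => x * (c * (α ^ 2 + α + θ * β * x ^ 2) * Real.exp (-θ * x) * x ^ (α - 1)))
      (fun x hx => by
        have hx0 : 0 < x := hx
        have p1 := key x hx0 1 α (by push_cast; ring)
        have p2 := key x hx0 3 (α + 2) (by push_cast; ring)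
        rw [← p1, ← p2]; ring)
    rw [this]
    ring_nf
  -- second moment
  have hM2 : (∫ x in Set.Ioi (0 : ℝ),
      x ^ 2 * (c * (α ^ 2 + α + θ * β * x ^ 2) * Real.exp (-θ * x) * x ^ (α - 1)))
      = (c * (α ^ 2 + α)) * (Real.Gamma (α + 2) * (1 / θ) ^ (α + 2))
        + (c * (θ * β)) * (Real.Gamma (α + 4) * (1 / θ) ^ (α + 4)) := by
    have := exg_int (θ := θ) (A := c * (α ^ 2 + α)) (B := c * (θ * β)) hθ (s := α + 1) (t := α + 3) (by linarith) (by linarith)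
      (fun x => x ^ 2 * (c * (α ^ 2 + α + θ * β * x ^ 2) * Real.exp (-θ * x) * x ^ (α - 1)))
      (fun x hx => by
        have hx0 : 0 < x := hx
        have p1 := key x hx0 2 (α + 1) (by push_cast; ring)
        have p2 := key x hx0 4 (α + 3) (by push_cast; ring)
        rw [← p1, ← p2]; ring)
    rw [this]
    ring_nf
  rw [hM1, hM2]
  -- Gamma recursions
  have hne1 : α + 1 ≠ 0 := by positivity
  have hne2 : α + 2 ≠ 0 := by positivity
  have hne3 : α + 3 ≠ 0 := by positivity
  have hΓ2 : Real.Gamma (α + 2) = (α + 1) * Real.Gamma (α + 1) := by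
    rw [show α + 2 = (α + 1) + 1 by ring, Real.Gamma_add_one hne1]
  have hΓ3 : Real.Gamma (α + 3) = (α + 2) * Real.Gamma (α + 2) := by
    rw [show α + 3 = (α + 2) + 1 by ring, Real.Gamma_add_one hne2]
  have hΓ4 : Real.Gamma (α + 4) = (α + 3) * ((α + 2) * Real.Gamma (α + 2)) := by
    rw [show α + 4 = (α + 3) + 1 by ring, Real.Gamma_add_one hne3, hΓ3]
  -- rpow facts
  have h1 : (1 / θ) ^ (α + 1) = (θ ^ (α + 1))⁻¹ := by
    rw [one_div, ← Real.inv_rpow hθ.le]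
  have hstep : ∀ r : ℝ, (1 / θ) ^ (r + 1) = (1 / θ) ^ r * θ⁻¹ := by
    intro r
    rw [Real.rpow_add (by positivity), Real.rpow_one, one_div]
  have h2 : (1 / θ) ^ (α + 2) = (θ ^ (α + 1))⁻¹ * θ⁻¹ := by
    rw [show α + 2 = (α + 1) + 1 by ring, hstep, h1]
  have h3 : (1 / θ) ^ (α + 3) = (θ ^ (α + 1))⁻¹ * θ⁻¹ * θ⁻¹ := by
    rw [show α + 3 = (α + 1) + 1 + 1 by ring, hstep, hstep, h1]
  have h4 : (1 / θ) ^ (α + 4) = (θ ^ (α + 1))⁻¹ * θ⁻¹ * θ⁻¹ * θ⁻¹ := by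
    rw [show α + 4 = (α + 1) + 1 + 1 + 1 by ring, hstep, hstep, hstep, h1]
  rw [hΓ3, hΓ4, h1, h2, h3, h4, hc]
  have hT : θ ^ (α + 1) ≠ 0 := by positivity
  have hG : Real.Gamma (α + 2) ≠ 0 := (Real.Gamma_pos_of_pos (by linarith)).ne'
  have hG1 : Real.Gamma (α + 1) = Real.Gamma (α + 2) / (α + 1) := by
    rw [hΓ2]; field_simp
  rw [hG1]
  have hθβ : θ + β ≠ 0 := by positivity
  field_simp
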